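/- The normalization function n terminates and produces Negation Normal Form: for every match expression m, every element of the list n m is in NNF (negations occur only directly on primitives, no ¬True and no negated conjunctions), and the disjunction of the elements of n m is logically equivalent to m under any Boolean primitive matcher and packet. -/

import Mathlib

inductive MExpr (X : Type) where
  | prim (x : X) | neg (m : MExpr X) | and (m₁ m₂ : MExpr X) | tt
deriving DecidableEq

/-- Lifting of a Boolean primitive matcher to match expressions. -/
def mmatch {X P : Type} (γ : X → P → Bool) (p : P) : MExpr X → Bool
  | .prim x => γ x p
  | .neg m => !(mmatch γ p m)
  | .and m₁ m₂ => mmatch γ p m₁ && mmatch γ p m₂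
  | .tt => true

/-- NNF normalization: returns a list of match expressions whose
(meta-logical) disjunction is equivalent to the input. -/
def nnf {X : Type} : MExpr X → List (MExpr X)
  | .tt => [.tt]
  | .and m₁ m₂ => (nnf m₁).flatMap (fun x => (nnf m₂).map (fun y => MExpr.and x y))
  | .neg (.and m₁ m₂) => nnf (.neg m₁) ++ nnf (.neg m₂)
  | .neg (.neg m) => nnf m
  | .neg .tt => []
  | .prim x => [.prim x]
  | .neg (.prim x) => [.neg (.prim x)]
termination_by m => sizeOf m

/-- Negation normal form: negations occur only directly on primitives. -/
def isNNF {X : Type} : MExpr X → Prop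
  | .neg (.prim _) => True
  | .neg _ => False
  | .and m₁ m₂ => isNNF m₁ ∧ isNNF m₂
  | _ => True

/-- `nnf` produces NNF formulas whose disjunction is equivalent to the input.
(Termination of `nnf` is established by its definition as a total function.) -/
theorem nnf_correct {X : Type} (m : MExpr X) :
    (∀ m' ∈ nnf m, isNNF m') ∧
    (∀ (P : Type) (γ : X → P → Bool) (p : P),
      mmatch γ p m = true ↔ ∃ m' ∈ nnf m, mmatch γ p m' = true) := by
  induction m using nnf.induct with
  | case1 =>
    constructor
    · intro m' hm'; simp [nnf] at hm'; subst hm'; trivial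
    · intro P γ p; simp [nnf, mmatch]
  | case2 m₁ m₂ ih₁ ih₂ =>
    obtain ⟨h1, e1⟩ := ih₁; obtain ⟨h2, e2⟩ := ih₂
    constructor
    · intro m' hm'
      simp [nnf, List.mem_flatMap, List.mem_map] at hm'
      obtain ⟨x, hx, y, hy, rfl⟩ := hm'
      exact ⟨h2 x hx, h1 y hy⟩
    · intro P γ p
      simp only [nnf, mmatch, Bool.and_eq_true, e1 P γ p, e2 P γ p,
        List.mem_flatMap, List.mem_map]
      constructor
      · rintro ⟨⟨x, hx, hxm⟩, ⟨y, hy, hym⟩⟩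
        exact ⟨_, ⟨x, hx, y, hy, rfl⟩, by simp [mmatch, hxm, hym]⟩
      · rintro ⟨m', ⟨x, hx, y, hy, rfl⟩, hm⟩
        simp [mmatch] at hm
        exact ⟨⟨x, hx, hm.1⟩, ⟨y, hy, hm.2⟩⟩
  | case3 m₁ m₂ ih₁ ih₂ =>
    obtain ⟨h1, e1⟩ := ih₁; obtain ⟨h2, e2⟩ := ih₂
    constructor
    · intro m' hm'
      simp [nnf, List.mem_append] at hm'
      rcases hm' with h | h
      · exact h1 _ h
      · exact h2 _ h
    · intro P γ p
      have E1 := e1 P γ p; have E2 := e2 P γ p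
      simp only [nnf, mmatch, List.mem_append] at *
      constructor
      · intro h
        simp at h
        rcases h with h | h
        · obtain ⟨m', hm', hmm⟩ := E1.1 (by simp [h])
          exact ⟨m', Or.inl hm', hmm⟩
        · obtain ⟨m', hm', hmm⟩ := E2.1 (by simp [h])
          exact ⟨m', Or.inr hm', hmm⟩
      · rintro ⟨m', h | h, hmm⟩
        · have hm := E1.2 ⟨m', h, hmm⟩
          simp at hm ⊢; tauto
        · have hm := E2.2 ⟨m', h, hmm⟩
          simp at hm ⊢; tauto
  | case4 m ih =>
    obtain ⟨h1, e1⟩ := ih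
    refine ⟨fun m' hm' => h1 m' (by simpa [nnf] using hm'), fun P γ p => ?_⟩
    simp only [nnf, mmatch, Bool.not_not, ← e1 P γ p]
  | case5 =>
    refine ⟨fun m' hm' => by simp [nnf] at hm', fun P γ p => ?_⟩
    simp [nnf, mmatch]
  | case6 x =>
    refine ⟨fun m' hm' => by simp [nnf] at hm'; subst hm'; trivial, fun P γ p => ?_⟩
    simp [nnf, mmatch]
  | case7 x =>
    refine ⟨fun m' hm' => by simp [nnf] at hm'; subst hm'; trivial, fun P γ p => ?_⟩
    simp [nnf, mmatch]
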